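/- Let X be a Banach space whose dual X' contains no subspace isomorphic to ℓ¹. Then X contains no subspace isomorphic to ℓ¹ and no subspace isomorphic to c₀. -/

import Mathlib

open scoped ENNReal

noncomputable section

/-- A Banach space `X` contains an isomorphic copy of the Banach space `Z` if there is a
continuous linear map `Z → X` which is bounded below (hence a linear homeomorphism onto a
closed subspace of `X`). -/
def ContainsCopyOf (𝕜 Z X : Type*) [NontriviallyNormedField 𝕜] [NormedAddCommGroup Z]
    [NormedSpace 𝕜 Z] [NormedAddCommGroup X] [NormedSpace 𝕜 X] : Prop :=
  ∃ T : Z →L[𝕜] X, ∃ c : ℝ, 0 < c ∧ ∀ z : Z, c * ‖z‖ ≤ ‖T z‖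

section Aux

variable {X : Type*} [NormedAddCommGroup X] [NormedSpace ℂ X]

def quadSet : Set ℂ := {1, -1, Complex.I, -Complex.I}

lemma quad_norm_one {u : ℂ} (hu : u ∈ quadSet) : ‖u‖ = 1 := by
  simp only [quadSet, Set.mem_insert_iff, Set.mem_singleton_iff] at hu
  rcases hu with rfl | rfl | rfl | rfl <;> simp

lemma exists_quad (w : ℂ) : ∃ u ∈ quadSet, ‖w‖ ≤ Real.sqrt 2 * (u * w).re := by
  have hmax : ‖w‖ ≤ Real.sqrt 2 * (|w.re| ⊔ |w.im|) := by
    rw [Complex.norm_def, Complex.normSq_apply]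
    have h1 : w.re * w.re + w.im * w.im ≤ 2 * (|w.re| ⊔ |w.im|) ^ 2 := by
      have h2 : |w.re| ≤ |w.re| ⊔ |w.im| := le_max_left _ _
      have h3 : |w.im| ≤ |w.re| ⊔ |w.im| := le_max_right _ _
      have h4 : (0:ℝ) ≤ |w.re| := abs_nonneg _
      have h5 : (0:ℝ) ≤ |w.im| := abs_nonneg _
      nlinarith [abs_mul_abs_self w.re, abs_mul_abs_self w.im]
    calc Real.sqrt (w.re * w.re + w.im * w.im) ≤ Real.sqrt (2 * (|w.re| ⊔ |w.im|) ^ 2) :=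
          Real.sqrt_le_sqrt h1
      _ = Real.sqrt 2 * (|w.re| ⊔ |w.im|) := by
          rw [Real.sqrt_mul (by norm_num), Real.sqrt_sq (le_max_of_le_left (abs_nonneg _))]
  have hu : ∃ u ∈ quadSet, (u * w).re = |w.re| ⊔ |w.im| := by
    rcases le_total |w.im| |w.re| with h | h
    · rcases le_total 0 w.re with h0 | h0
      · refine ⟨1, by simp [quadSet], ?_⟩
        simp only [one_mul, abs_of_nonneg h0]
        exact (max_eq_left (by rwa [abs_of_nonneg h0] at h)).symm
      · refine ⟨-1, by simp [quadSet], ?_⟩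
        rw [abs_of_nonpos h0] at h ⊢
        simp [Complex.mul_re, max_eq_left h]
    · rcases le_total 0 w.im with h0 | h0
      · refine ⟨-Complex.I, by simp [quadSet], ?_⟩
        rw [abs_of_nonneg h0] at h ⊢
        simp [Complex.mul_re, max_eq_right h]
      · refine ⟨Complex.I, by simp [quadSet], ?_⟩
        rw [abs_of_nonpos h0] at h ⊢
        simp [Complex.mul_re, max_eq_right h]
  obtain ⟨u, hu1, hu2⟩ := hu
  exact ⟨u, hu1, by rw [hu2]; exact hmax⟩

lemma extend_through {Z X : Type*} [NormedAddCommGroup Z] [NormedSpace ℂ Z]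
    [NormedAddCommGroup X] [NormedSpace ℂ X]
    (T : Z →L[ℂ] X) {c : ℝ} (hc : 0 < c) (hT : ∀ z, c * ‖z‖ ≤ ‖T z‖)
    (f : Z →L[ℂ] ℂ) (hf : ∀ z, ‖f z‖ ≤ ‖z‖) :
    ∃ G : X →L[ℂ] ℂ, ‖G‖ ≤ 1 / c ∧ ∀ z, G (T z) = f z := by
  have hinj : Function.Injective (T.toLinearMap) := by
    intro x y hxy
    have h1 : c * ‖x - y‖ ≤ ‖T (x - y)‖ := hT _
    rw [map_sub, show T x = T y from hxy, sub_self, norm_zero] at h1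
    have h2 : ‖x - y‖ ≤ 0 := by nlinarith [norm_nonneg (x - y)]
    have h3 : x - y = 0 := norm_le_zero_iff.mp h2
    exact sub_eq_zero.mp h3
  set e := LinearEquiv.ofInjective T.toLinearMap hinj with he
  have hkey : ∀ y : LinearMap.range T.toLinearMap, (y : X) = T (e.symm y) := by
    intro y
    conv_lhs => rw [← e.apply_symm_apply y]
    rw [LinearEquiv.ofInjective_apply]
    rfl
  set φ : LinearMap.range T.toLinearMap →ₗ[ℂ] ℂ :=
    f.toLinearMap.comp (e.symm.toLinearMap) with hφ
  have hφb : ∀ y : LinearMap.range T.toLinearMap, ‖φ y‖ ≤ (1 / c) * ‖y‖ := by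
    intro y
    have h1 : ‖f (e.symm y)‖ ≤ ‖(e.symm y : Z)‖ := hf _
    have h2 : c * ‖(e.symm y : Z)‖ ≤ ‖T (e.symm y)‖ := hT _
    rw [← hkey y] at h2
    have : ‖φ y‖ ≤ ‖(e.symm y : Z)‖ := h1
    calc ‖φ y‖ ≤ ‖(e.symm y : Z)‖ := h1
      _ ≤ (1 / c) * ‖(y : X)‖ := by rw [div_mul_eq_mul_div, le_div_iff₀ hc]; linarith
      _ = (1 / c) * ‖y‖ := rfl
  set F := LinearMap.mkContinuous φ (1 / c) hφb with hF
  obtain ⟨g, hg, hgn⟩ := exists_extension_norm_eq (LinearMap.range T.toLinearMap) F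
  refine ⟨g, ?_, ?_⟩
  · rw [hgn]
    exact LinearMap.mkContinuous_norm_le _ (by positivity) _
  · intro z
    have hz : T z ∈ LinearMap.range T.toLinearMap := ⟨z, rfl⟩
    have := hg ⟨T z, hz⟩
    rw [show ((⟨T z, hz⟩ : LinearMap.range T.toLinearMap) : X) = T z from rfl] at this
    rw [this]
    show φ ⟨T z, hz⟩ = f z
    have hez : e z = ⟨T z, hz⟩ := Subtype.ext (by rw [LinearEquiv.ofInjective_apply]; rfl)
    rw [hφ]
    simp only [LinearMap.comp_apply, LinearEquiv.coe_toLinearMap]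
    rw [← hez, e.symm_apply_apply]
    rfl

lemma l1_hasSum_norm (a : lp (fun _ : ℕ => ℂ) 1) : HasSum (fun n => ‖a n‖) ‖a‖ := by
  have := lp.hasSum_norm (p := 1) (by norm_num) a
  simpa using this

lemma containsL1_of_functionals {W : Type*} [NormedAddCommGroup W] [NormedSpace ℂ W]
    [CompleteSpace W] (v : ℕ → W) (M R : ℝ) (hR : 0 < R) (hv : ∀ n, ‖v n‖ ≤ M)
    (hsep : ∀ (s : Finset ℕ) (σ : ℕ → ℂ), (∀ n ∈ s, σ n ∈ quadSet) →
      ∃ φ : W →L[ℂ] ℂ, ‖φ‖ ≤ R ∧ (∀ n ∈ s, φ (v n) = σ n) ∧ ∀ n ∉ s, φ (v n) = 0) :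
    ∃ T : lp (fun _ : ℕ => ℂ) 1 →L[ℂ] W, ∃ c : ℝ, 0 < c ∧
      ∀ z : lp (fun _ : ℕ => ℂ) 1, c * ‖z‖ ≤ ‖T z‖ := by
  have hM0 : 0 ≤ M := le_trans (norm_nonneg _) (hv 0)
  have hsumn : ∀ a : lp (fun _ : ℕ => ℂ) 1, Summable (fun n => ‖a n‖) :=
    fun a => (l1_hasSum_norm a).summable
  have hsum : ∀ a : lp (fun _ : ℕ => ℂ) 1, Summable (fun n => a n • v n) := by
    intro a
    refine Summable.of_norm_bounded ((hsumn a).mul_right M) (fun n => ?_)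
    rw [norm_smul]
    exact mul_le_mul_of_nonneg_left (hv n) (norm_nonneg _)
  set Slin : lp (fun _ : ℕ => ℂ) 1 →ₗ[ℂ] W :=
    { toFun := fun a => ∑' n, a n • v n
      map_add' := fun a b => by
        dsimp only
        have h : ∀ n, ((a + b : lp (fun _ : ℕ => ℂ) 1) n • v n)
            = a n • v n + b n • v n := by
          intro n
          rw [lp.coeFn_add, Pi.add_apply, add_smul]
        rw [tsum_congr h, Summable.tsum_add (hsum a) (hsum b)]
      map_smul' := fun r a => by
        dsimp only
        have h : ∀ n, ((r • a : lp (fun _ : ℕ => ℂ) 1) n • v n)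
            = r • (a n • v n) := by
          intro n
          rw [lp.coeFn_smul, Pi.smul_apply, smul_smul, smul_eq_mul]
        rw [tsum_congr h, Summable.tsum_const_smul r (hsum a)]
        rfl } with hSlin
  have hns : ∀ a : lp (fun _ : ℕ => ℂ) 1, Summable (fun n => ‖a n • v n‖) := by
    intro a
    refine Summable.of_nonneg_of_le (fun n => norm_nonneg _) (fun n => ?_)
      ((hsumn a).mul_right M)
    rw [norm_smul]
    exact mul_le_mul_of_nonneg_left (hv n) (norm_nonneg _)
  have hbound : ∀ a : lp (fun _ : ℕ => ℂ) 1, ‖Slin a‖ ≤ M * ‖a‖ := by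
    intro a
    have h1 : ‖∑' n, a n • v n‖ ≤ ∑' n, ‖a n‖ * M := by
      refine le_trans (norm_tsum_le_tsum_norm (hns a)) (Summable.tsum_le_tsum (fun n => ?_) ?_ ?_)
      · rw [norm_smul]
        exact mul_le_mul_of_nonneg_left (hv n) (norm_nonneg _)
      · exact hns a
      · exact (hsumn a).mul_right M
    rw [tsum_mul_right, (l1_hasSum_norm a).tsum_eq] at h1
    calc ‖Slin a‖ = ‖∑' n, a n • v n‖ := rfl
      _ ≤ ‖a‖ * M := h1
      _ = M * ‖a‖ := mul_comm _ _
  set S := Slin.mkContinuous M hbound with hS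
  refine ⟨S, (Real.sqrt 2 * R)⁻¹, by positivity, fun a => ?_⟩
  have key : ‖a‖ ≤ (Real.sqrt 2 * R) * ‖S a‖ := by
    refine le_of_forall_pos_le_add (fun ε hε => ?_)
    -- choose a finset capturing most of the norm
    have h1 : ∀ᶠ s in Filter.atTop, ‖a‖ - ε < ∑ n ∈ s, ‖a n‖ :=
      (l1_hasSum_norm a).eventually (eventually_gt_nhds (by linarith))
    obtain ⟨s, hs⟩ := h1.exists
    choose u hu1 hu2 using fun n => exists_quad (a n)
    obtain ⟨φ, hφn, hφ1, hφ2⟩ := hsep s u (fun n _ => hu1 n)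
    have hSa : φ (S a) = ∑ n ∈ s, a n * u n := by
      have h2 : φ (S a) = ∑' n, a n * φ (v n) := by
        rw [show S a = ∑' n, a n • v n from rfl, φ.map_tsum (hsum a)]
        congr 1
        ext n
        rw [φ.map_smul]
        rfl
      rw [h2]
      rw [tsum_eq_sum (f := fun n => a n * φ (v n)) (s := s)
        (fun n hn => by simp only [hφ2 n hn, mul_zero])]
      exact Finset.sum_congr rfl (fun n hn => by rw [hφ1 n hn])
    have h3 : ∑ n ∈ s, ‖a n‖ ≤ Real.sqrt 2 * (φ (S a)).re := by
      rw [hSa]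
      have : (∑ n ∈ s, a n * u n).re = ∑ n ∈ s, (u n * a n).re := by
        rw [Complex.re_sum]
        exact Finset.sum_congr rfl (fun n _ => by rw [mul_comm])
      rw [this, Finset.mul_sum]
      exact Finset.sum_le_sum (fun n _ => hu2 n)
    have h4 : (φ (S a)).re ≤ R * ‖S a‖ := by
      calc (φ (S a)).re ≤ ‖φ (S a)‖ := Complex.re_le_norm _
        _ ≤ ‖φ‖ * ‖S a‖ := φ.le_opNorm _
        _ ≤ R * ‖S a‖ := mul_le_mul_of_nonneg_right hφn (norm_nonneg _)
    have h5 : Real.sqrt 2 * (φ (S a)).re ≤ Real.sqrt 2 * (R * ‖S a‖) :=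
      mul_le_mul_of_nonneg_left h4 (Real.sqrt_nonneg 2)
    nlinarith [Real.sqrt_nonneg 2]
  have hK : (0:ℝ) < Real.sqrt 2 * R := by positivity
  rw [inv_mul_le_iff₀ hK]  -- (√2 R)⁻¹ * ‖a‖ ≤ ‖S a‖ ↔ ‖a‖ ≤ √2 R * ‖S a‖ ?
  linarith [key]

-- the evaluation functional on C₀(ℕ, ℂ)
def evC0 (n : ℕ) : ZeroAtInftyContinuousMap ℕ ℂ →L[ℂ] ℂ :=
  LinearMap.mkContinuous
    { toFun := fun z => z n
      map_add' := fun x y => rfl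
      map_smul' := fun c x => rfl } 1
    (fun z => by
      simpa using BoundedContinuousFunction.norm_coe_le_norm z.toBCF n)

lemma evC0_apply (n : ℕ) (z : ZeroAtInftyContinuousMap ℕ ℂ) : evC0 n z = z n := rfl

lemma evC0_bound (n : ℕ) (z : ZeroAtInftyContinuousMap ℕ ℂ) : ‖evC0 n z‖ ≤ ‖z‖ := by
  rw [evC0_apply]
  simpa using BoundedContinuousFunction.norm_coe_le_norm z.toBCF n

-- a finitely supported function as an element of C₀(ℕ, ℂ)
def finC0 (s : Finset ℕ) (σ : ℕ → ℂ) : ZeroAtInftyContinuousMap ℕ ℂ :=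
  { toFun := fun n => if n ∈ s then σ n else 0
    continuous_toFun := continuous_of_discreteTopology
    zero_at_infty' := by
      have hev : ∀ᶠ n in Filter.cofinite, (if n ∈ s then σ n else 0) = 0 := by
        rw [Filter.eventually_cofinite]
        refine s.finite_toSet.subset (fun n hn => ?_)
        simp only [Set.mem_setOf_eq] at hn
        by_contra hns
        exact hn (if_neg hns)
      rw [Filter.cocompact_eq_cofinite ℕ]
      exact tendsto_const_nhds.congr' (by filter_upwards [hev] with n h using h.symm) }

lemma finC0_apply (s : Finset ℕ) (σ : ℕ → ℂ) (n : ℕ) :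
    finC0 s σ n = if n ∈ s then σ n else 0 := rfl

lemma finC0_norm_le (s : Finset ℕ) (σ : ℕ → ℂ) (hσ : ∀ n ∈ s, σ n ∈ quadSet) :
    ‖finC0 s σ‖ ≤ 1 := by
  rw [← ZeroAtInftyContinuousMap.norm_toBCF_eq_norm]
  refine (BoundedContinuousFunction.norm_le zero_le_one).mpr (fun n => ?_)
  show ‖finC0 s σ n‖ ≤ 1
  rw [finC0_apply]
  by_cases hn : n ∈ s
  · rw [if_pos hn, quad_norm_one (hσ n hn)]
  · rw [if_neg hn]; simp

lemma dual_l1_of_c0 [CompleteSpace X] (T : ZeroAtInftyContinuousMap ℕ ℂ →L[ℂ] X)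
    {c : ℝ} (hc : 0 < c) (hT : ∀ z, c * ‖z‖ ≤ ‖T z‖) :
    ∃ S : lp (fun _ : ℕ => ℂ) 1 →L[ℂ] StrongDual ℂ X, ∃ c' : ℝ, 0 < c' ∧
      ∀ a : lp (fun _ : ℕ => ℂ) 1, c' * ‖a‖ ≤ ‖S a‖ := by
  choose v hv1 hv2 using fun n => extend_through T hc hT (evC0 n) (evC0_bound n)
  refine containsL1_of_functionals v (1 / c) (max ‖T‖ 1)
    (lt_of_lt_of_le one_pos (le_max_right _ _)) hv1 ?_
  intro s σ hσ
  set z := finC0 s σ with hz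
  refine ⟨NormedSpace.inclusionInDoubleDual ℂ X (T z), ?_, ?_, ?_⟩
  · calc ‖NormedSpace.inclusionInDoubleDual ℂ X (T z)‖ ≤ ‖T z‖ :=
        NormedSpace.double_dual_bound ℂ X _
      _ ≤ ‖T‖ * ‖z‖ := T.le_opNorm _
      _ ≤ ‖T‖ * 1 := mul_le_mul_of_nonneg_left (finC0_norm_le s σ hσ) (norm_nonneg T)
      _ ≤ max ‖T‖ 1 := by rw [mul_one]; exact le_max_left _ _
  · intro n hn
    rw [NormedSpace.dual_def, hv2 n z, evC0_apply, finC0_apply, if_pos hn]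
  · intro n hn
    rw [NormedSpace.dual_def, hv2 n z, evC0_apply, finC0_apply, if_neg hn]

/-- The five complex values used for sign patterns. -/
def c5 : Fin 5 → ℂ := ![0, 1, -1, Complex.I, -Complex.I]

lemma c5_zero : c5 0 = 0 := rfl

lemma c5_norm_le (j : Fin 5) : ‖c5 j‖ ≤ 1 := by
  fin_cases j <;> simp [c5]

/-- index of a quad element -/
def qidx (w : ℂ) : Fin 5 :=
  if w = 1 then 1 else if w = -1 then 2 else if w = Complex.I then 3
  else if w = -Complex.I then 4 else 0

lemma c5_qidx {w : ℂ} (hw : w ∈ quadSet) : c5 (qidx w) = w := by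
  simp only [quadSet, Set.mem_insert_iff, Set.mem_singleton_iff] at hw
  have hI : Complex.I ≠ 1 := by simp [Complex.ext_iff]
  have hI2 : Complex.I ≠ -1 := by simp [Complex.ext_iff]
  have hI3 : (-Complex.I) ≠ 1 := by simp [Complex.ext_iff]
  have hI4 : (-Complex.I) ≠ -1 := by simp [Complex.ext_iff]
  have hI5 : (-Complex.I) ≠ Complex.I := by simp [Complex.ext_iff]; norm_num
  have h12 : (-1 : ℂ) ≠ 1 := by norm_num
  rcases hw with rfl | rfl | rfl | rfl <;>
    simp [qidx, c5, hI, hI2, hI3, hI4, hI5, h12]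

/-- pairing with a bounded sequence gives a functional on ℓ¹ -/
def pairL1 (b : ℕ → ℂ) (hb : ∀ k, ‖b k‖ ≤ 1) : lp (fun _ : ℕ => ℂ) 1 →L[ℂ] ℂ :=
  LinearMap.mkContinuous
    { toFun := fun z => ∑' k, b k * z k
      map_add' := fun x y => by
        dsimp only
        have h : ∀ k, b k * (x + y : lp (fun _ : ℕ => ℂ) 1) k = b k * x k + b k * y k := by
          intro k
          rw [lp.coeFn_add, Pi.add_apply, mul_add]
        have hsx : Summable (fun k => b k * x k) := by
          refine Summable.of_norm_bounded ((l1_hasSum_norm x).summable) (fun k => ?_)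
          rw [norm_mul]
          calc ‖b k‖ * ‖x k‖ ≤ 1 * ‖x k‖ :=
            mul_le_mul_of_nonneg_right (hb k) (norm_nonneg _)
            _ = ‖x k‖ := one_mul _
        have hsy : Summable (fun k => b k * y k) := by
          refine Summable.of_norm_bounded ((l1_hasSum_norm y).summable) (fun k => ?_)
          rw [norm_mul]
          calc ‖b k‖ * ‖y k‖ ≤ 1 * ‖y k‖ :=
            mul_le_mul_of_nonneg_right (hb k) (norm_nonneg _)
            _ = ‖y k‖ := one_mul _
        rw [tsum_congr h, Summable.tsum_add hsx hsy]
      map_smul' := fun r x => by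
        dsimp only
        have h : ∀ k, b k * (r • x : lp (fun _ : ℕ => ℂ) 1) k = r • (b k * x k) := by
          intro k
          rw [lp.coeFn_smul, Pi.smul_apply, smul_eq_mul, smul_eq_mul]
          ring
        have hsx : Summable (fun k => b k * x k) := by
          refine Summable.of_norm_bounded ((l1_hasSum_norm x).summable) (fun k => ?_)
          rw [norm_mul]
          calc ‖b k‖ * ‖x k‖ ≤ 1 * ‖x k‖ :=
            mul_le_mul_of_nonneg_right (hb k) (norm_nonneg _)
            _ = ‖x k‖ := one_mul _
        rw [tsum_congr h, Summable.tsum_const_smul r hsx]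
        rfl } 1
    (fun z => by
      dsimp only
      have hs : Summable (fun k => ‖b k * z k‖) := by
        refine Summable.of_nonneg_of_le (fun k => norm_nonneg _) (fun k => ?_)
          ((l1_hasSum_norm z).summable)
        rw [norm_mul]
        calc ‖b k‖ * ‖z k‖ ≤ 1 * ‖z k‖ :=
          mul_le_mul_of_nonneg_right (hb k) (norm_nonneg _)
          _ = ‖z k‖ := one_mul _
      rw [one_mul]
      refine le_trans (norm_tsum_le_tsum_norm hs) ?_
      rw [← (l1_hasSum_norm z).tsum_eq]
      refine Summable.tsum_le_tsum (fun k => ?_) hs ((l1_hasSum_norm z).summable)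
      rw [norm_mul]
      calc ‖b k‖ * ‖z k‖ ≤ 1 * ‖z k‖ :=
        mul_le_mul_of_nonneg_right (hb k) (norm_nonneg _)
        _ = ‖z k‖ := one_mul _)

lemma pairL1_apply (b : ℕ → ℂ) (hb : ∀ k, ‖b k‖ ≤ 1) (z : lp (fun _ : ℕ => ℂ) 1) :
    pairL1 b hb z = ∑' k, b k * z k := rfl

lemma pairL1_bound (b : ℕ → ℂ) (hb : ∀ k, ‖b k‖ ≤ 1) (z : lp (fun _ : ℕ => ℂ) 1) :
    ‖pairL1 b hb z‖ ≤ ‖z‖ := by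
  simpa using (pairL1 b hb).le_of_opNorm_le (LinearMap.mkContinuous_norm_le _ zero_le_one _) z

lemma pairL1_single (b : ℕ → ℂ) (hb : ∀ k, ‖b k‖ ≤ 1) (k₀ : ℕ) :
    pairL1 b hb (lp.single 1 k₀ (1 : ℂ)) = b k₀ := by
  rw [pairL1_apply]
  rw [tsum_eq_single k₀ ?_]
  · rw [lp.single_apply_self, mul_one]
  · intro k hk
    rw [lp.single_apply_ne 1 k₀ _ hk, mul_zero]

lemma dual_l1_of_l1 [CompleteSpace X] (T : lp (fun _ : ℕ => ℂ) 1 →L[ℂ] X)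
    {c : ℝ} (hc : 0 < c) (hT : ∀ z, c * ‖z‖ ≤ ‖T z‖) :
    ∃ S : lp (fun _ : ℕ => ℂ) 1 →L[ℂ] StrongDual ℂ X, ∃ c' : ℝ, 0 < c' ∧
      ∀ a : lp (fun _ : ℕ => ℂ) 1, c' * ‖a‖ ≤ ‖S a‖ := by
  obtain ⟨e, he⟩ := exists_surjective_nat (ℕ →₀ Fin 5)
  -- the functionals f n on ℓ¹ : z ↦ ∑' k, c5 (e k n) * z k
  have hbk : ∀ n k, ‖c5 (e k n)‖ ≤ 1 := fun n k => c5_norm_le _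
  choose v hv1 hv2 using fun n =>
    extend_through T hc hT (pairL1 (fun k => c5 (e k n)) (hbk n))
      (pairL1_bound (fun k => c5 (e k n)) (hbk n))
  refine containsL1_of_functionals v (1 / c) (max ‖T‖ 1)
    (lt_of_lt_of_le one_pos (le_max_right _ _)) hv1 ?_
  intro s σ hσ
  -- build the sign pattern as a finsupp, and find its index k₀
  classical
  set t : ℕ → Fin 5 := fun n => if n ∈ s then qidx (σ n) else 0 with ht
  have htsupp : ∀ n, t n ≠ 0 → n ∈ s := by
    intro n hn
    by_contra hns
    exact hn (by rw [ht]; simp [if_neg hns])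
  obtain ⟨k₀, hk₀⟩ := he (Finsupp.onFinset s t htsupp)
  set z : lp (fun _ : ℕ => ℂ) 1 := lp.single 1 k₀ (1 : ℂ) with hzdef
  have hznorm : ‖z‖ = 1 := by
    rw [hzdef, lp.norm_single (E := fun _ : ℕ => ℂ) (p := 1) (by norm_num) k₀ (1:ℂ)]
    simp
  have hvz : ∀ n, v n (T z) = c5 (t n) := by
    intro n
    rw [hv2 n z, hzdef, pairL1_single]
    have : e k₀ n = t n := by rw [hk₀]; exact Finsupp.onFinset_apply
    rw [this]
  refine ⟨NormedSpace.inclusionInDoubleDual ℂ X (T z), ?_, ?_, ?_⟩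
  · calc ‖NormedSpace.inclusionInDoubleDual ℂ X (T z)‖ ≤ ‖T z‖ :=
        NormedSpace.double_dual_bound ℂ X _
      _ ≤ ‖T‖ * ‖z‖ := T.le_opNorm _
      _ ≤ max ‖T‖ 1 := by rw [hznorm, mul_one]; exact le_max_left _ _
  · intro n hn
    rw [NormedSpace.dual_def, hvz n, ht]
    simp only [if_pos hn]
    exact c5_qidx (hσ n hn)
  · intro n hn
    rw [NormedSpace.dual_def, hvz n, ht]
    simp only [if_neg hn]
    exact c5_zero

end Aux

/-- If the dual of a Banach space `X` contains no copy of `ℓ¹`, then `X` contains no copy of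
`ℓ¹` and no copy of `c₀`. -/
theorem no_l1_no_c0_of_dual_no_l1 {X : Type*} [NormedAddCommGroup X] [NormedSpace ℂ X]
    [CompleteSpace X]
    (h : ¬ ContainsCopyOf ℂ (lp (fun _ : ℕ => ℂ) 1) (StrongDual ℂ X)) :
    ¬ ContainsCopyOf ℂ (lp (fun _ : ℕ => ℂ) 1) X ∧
      ¬ ContainsCopyOf ℂ (ZeroAtInftyContinuousMap ℕ ℂ) X := by
  constructor
  · rintro ⟨T, c, hc, hT⟩
    obtain ⟨S, c', hc', hS⟩ := dual_l1_of_l1 T hc hT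
    exact h ⟨S, c', hc', hS⟩
  · rintro ⟨T, c, hc, hT⟩
    obtain ⟨S, c', hc', hS⟩ := dual_l1_of_c0 T hc hT
    exact h ⟨S, c', hc', hS⟩
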